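/- Free groups have unique roots: if a^m = b^m in a free group for some nonzero integer m, then a = b. -/

import Mathlib

open Subgroup

lemma freeGroup_subsingleton_pow {β : Type*} [Subsingleton β] (s : β) (x : FreeGroup β) :
    ∃ n : ℤ, x = FreeGroup.of s ^ n := by
  induction x with
  | C1 => exact ⟨0, by simp⟩
  | of t => exact ⟨1, by rw [Subsingleton.elim t s]; rfl⟩
  | inv_of t _ => exact ⟨-1, by rw [Subsingleton.elim t s, zpow_neg, zpow_one]⟩
  | mul x y hx hy =>
      obtain ⟨n, rfl⟩ := hx; obtain ⟨k, rfl⟩ := hy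
      exact ⟨n + k, (zpow_add _ _ _).symm⟩

lemma freeGroup_of_zpow_eq_one {β : Type*} (s : β) {n : ℤ}
    (h : FreeGroup.of s ^ n = (1 : FreeGroup β)) : n = 0 := by
  have := congrArg (FreeGroup.lift (fun _ : β => Multiplicative.ofAdd (1 : ℤ))) h
  simp only [map_zpow, map_one, FreeGroup.lift_apply_of] at this
  have h2 := congrArg Multiplicative.toAdd this
  simpa using h2

lemma freeGroup_isEmpty_eq_one {β : Type*} [IsEmpty β] (x : FreeGroup β) : x = 1 := by
  induction x with
  | C1 => rfl
  | of t => exact isEmptyElim t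
  | inv_of t _ => exact isEmptyElim t
  | mul x y hx hy => rw [hx, hy, one_mul]

lemma key_lemma {G : Type*} [Group G] [IsFreeGroup G] (x y : G)
    (hgen : closure ({x, y} : Set G) = ⊤) (m : ℤ) (hm : m ≠ 0) (h : x ^ m = y ^ m) :
    x = y := by
  classical
  set ι := IsFreeGroup.Generators G with hι
  let e : G ≃* FreeGroup ι := IsFreeGroup.toFreeGroup G
  let φ : FreeGroup ι →* Multiplicative (ι →₀ ℤ) :=
    FreeGroup.lift (fun i => Multiplicative.ofAdd (Finsupp.single i 1))
  let ψ : G →* Multiplicative (ι →₀ ℤ) := φ.comp e.toMonoidHom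
  -- ψ x = ψ y
  have hψxy : ψ x = ψ y := by
    have h1 : (ψ x) ^ m = (ψ y) ^ m := by rw [← map_zpow, ← map_zpow, h]
    have h2 : m • (ψ x).toAdd = m • (ψ y).toAdd := by
      simpa [← toAdd_zpow] using congrArg Multiplicative.toAdd h1
    have h3 : (ψ x).toAdd = (ψ y).toAdd := by
      ext i
      have := congrFun (congrArg (⇑) h2) i
      simp only [Finsupp.coe_smul, Pi.smul_apply, smul_eq_mul] at this
      exact mul_left_cancel₀ hm this
    exact Multiplicative.toAdd.injective h3
  -- every ψ g is a power of ψ x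
  have hpow : ∀ g : G, ∃ n : ℤ, (ψ x) ^ n = ψ g := by
    intro g
    have hg : g ∈ closure ({x, y} : Set G) := hgen ▸ mem_top g
    have : ψ g ∈ (closure ({x, y} : Set G)).map ψ := mem_map_of_mem ψ hg
    rw [MonoidHom.map_closure] at this
    have himg : ψ '' {x, y} = {ψ x} := by
      rw [Set.image_pair, ← hψxy]; simp
    rw [himg] at this
    exact mem_closure_singleton.mp this
  -- surjectivity of ψ
  have hsurj : ∀ u : ι →₀ ℤ, ∃ g : G, ψ g = Multiplicative.ofAdd u := by
    have hφ : ∀ u : ι →₀ ℤ, ∃ w : FreeGroup ι, φ w = Multiplicative.ofAdd u := by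
      intro u
      induction u using Finsupp.induction with
      | zero => exact ⟨1, by simp⟩
      | single_add i n f _ _ ih =>
          obtain ⟨w, hw⟩ := ih
          refine ⟨FreeGroup.of i ^ n * w, ?_⟩
          have hof : φ (FreeGroup.of i) = Multiplicative.ofAdd (Finsupp.single i (1:ℤ)) :=
            FreeGroup.lift_apply_of
          rw [map_mul, map_zpow, hw, hof, ← ofAdd_zsmul, ← ofAdd_add, Finsupp.smul_single,
            smul_eq_mul, mul_one]
    intro u
    obtain ⟨w, hw⟩ := hφ u
    exact ⟨e.symm w, by simpa [ψ] using hw⟩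
  -- ι is a subsingleton
  have hsub : Subsingleton ι := by
    constructor
    intro s t
    by_contra hst
    obtain ⟨gs, hgs⟩ := hsurj (Finsupp.single s 1)
    obtain ⟨gt, hgt⟩ := hsurj (Finsupp.single t 1)
    obtain ⟨n, hn⟩ := hpow gs
    obtain ⟨k, hk⟩ := hpow gt
    set v : ι →₀ ℤ := (ψ x).toAdd with hv
    have hns : Finsupp.single s (1:ℤ) = n • v := by
      have := congrArg Multiplicative.toAdd (hn.trans hgs)
      simpa [hv, ← toAdd_zpow] using this.symm
    have hks : Finsupp.single t (1:ℤ) = k • v := by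
      have := congrArg Multiplicative.toAdd (hk.trans hgt)
      simpa [hv, ← toAdd_zpow] using this.symm
    have h1 : n * v s = 1 := by
      have := congrFun (congrArg (⇑) hns) s; simpa using this.symm
    have h2 : k * v s = 0 := by
      have := congrFun (congrArg (⇑) hks) s
      simpa [Finsupp.single_apply, (Ne.symm hst)] using this.symm
    have h3 : k * v t = 1 := by
      have := congrFun (congrArg (⇑) hks) t; simpa using this.symm
    have hvs : v s ≠ 0 := by rintro h0; rw [h0, mul_zero] at h1; exact one_ne_zero h1.symm
    have hk0 : k = 0 := by rcases mul_eq_zero.mp h2 with h' | h'; exact h'; exact absurd h' hvs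
    rw [hk0, zero_mul] at h3
    exact one_ne_zero h3.symm
  -- transfer to FreeGroup ι
  haveI := hsub
  have hexy : e x = e y := by
    rcases isEmpty_or_nonempty ι with hE | hN
    · rw [freeGroup_isEmpty_eq_one (e x), freeGroup_isEmpty_eq_one (e y)]
    · obtain ⟨s⟩ := hN
      obtain ⟨n, hn⟩ := freeGroup_subsingleton_pow s (e x)
      obtain ⟨k, hk⟩ := freeGroup_subsingleton_pow s (e y)
      have hm' : FreeGroup.of s ^ (n * m) = FreeGroup.of s ^ (k * m) := by
        rw [zpow_mul, zpow_mul, ← hn, ← hk, ← map_zpow, ← map_zpow, h]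
      have : FreeGroup.of s ^ (n * m - k * m) = 1 := by
        rw [zpow_sub, hm', mul_inv_cancel]
      have hnk : n = k := by
        have := freeGroup_of_zpow_eq_one s this
        have := sub_eq_zero.mp this
        exact mul_right_cancel₀ hm this
      rw [hn, hk, hnk]
  exact e.injective hexy

theorem free_group_unique_roots {α : Type*}
    (a b : FreeGroup α) (m : ℤ) (hm : m ≠ 0) (h : a ^ m = b ^ m) :
    a = b := by
  classical
  set H : Subgroup (FreeGroup α) := closure {a, b} with hH
  have ha : a ∈ H := subset_closure (by simp)
  have hb : b ∈ H := subset_closure (by simp)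
  set x : H := ⟨a, ha⟩
  set y : H := ⟨b, hb⟩
  have hgen : closure ({x, y} : Set H) = ⊤ := by
    rw [eq_top_iff, ← closure_closure_coe_preimage (k := ({a, b} : Set (FreeGroup α)))]
    apply Subgroup.closure_mono
    rintro ⟨z, hz⟩ hz'
    simp only [Set.mem_preimage] at hz'
    rcases hz' with h' | h'
    · left; exact Subtype.ext h'
    · right; exact Subtype.ext h'
  have hxy : x ^ m = y ^ m := by
    apply Subtype.ext
    rw [SubgroupClass.coe_zpow, SubgroupClass.coe_zpow]
    exact h
  have := key_lemma x y hgen m hm hxy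
  exact congrArg Subtype.val this
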